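/- Let ρ be a compactly supported probability measure on ℝ with r(ρ) ≤ 0 and ρ({0}) = 0, and let α > 1. Define H_ρ(θ) = 1/θ + ∫ αu/(α - θu) ρ(du) for θ > 0. Then H_ρ(θ) = (1 - α)/θ + o(1/θ) as θ → +∞; in particular H_ρ(θ) < 0 for all sufficiently large θ. -/

import Mathlib

open MeasureTheory Real Filter Asymptotics
open scoped ENNReal Topology

/-- Let `ρ` be a compactly supported probability measure on `ℝ` with `r(ρ) ≤ 0` and
`ρ({0}) = 0`, and let `α > 1`. With `H_ρ(θ) = 1/θ + ∫ αu/(α - θu) ρ(du)` for `θ > 0`,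
we have `H_ρ(θ) = (1 - α)/θ + o(1/θ)` as `θ → +∞`; in particular `H_ρ(θ) < 0` for all
sufficiently large `θ`. -/
theorem H_rho_asymptotics_atTop
    (ρ : Measure ℝ) [IsProbabilityMeasure ρ] (α : ℝ) (hα : 1 < α)
    (R : ℝ) (hlb : ρ (Set.Iio (-R)) = 0)
    (hub : ρ (Set.Ioi 0) = 0) (h0 : ρ {(0 : ℝ)} = 0)
    (H : ℝ → ℝ)
    (hH : H = fun θ => 1 / θ + ∫ u, α * u / (α - θ * u) ∂ρ) :
    (fun θ => H θ - (1 - α) / θ) =o[atTop] (fun θ => 1 / θ) ∧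
      ∀ᶠ θ in atTop, H θ < 0 := by
  have hα0 : (0:ℝ) < α := lt_trans one_pos hα
  -- a.e. u < 0
  have hneg : ∀ᵐ u ∂ρ, u < 0 := by
    have h1 : ∀ᵐ u ∂ρ, ¬ (0 < u) := by
      rw [ae_iff]
      simpa [Set.Ioi] using hub
    have h2 : ∀ᵐ u ∂ρ, u ≠ 0 := by
      rw [ae_iff]
      simpa using h0
    filter_upwards [h1, h2] with u h1 h2
    exact lt_of_le_of_ne (not_lt.mp h1) h2
  set I : ℝ → ℝ := fun θ => ∫ u, (α - θ * u)⁻¹ ∂ρ with hIdef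
  have hmeas : ∀ θ : ℝ, AEStronglyMeasurable (fun u : ℝ => (α - θ*u)⁻¹) ρ :=
    fun θ => ((measurable_const.sub (measurable_const.mul measurable_id)).inv).aestronglyMeasurable
  have hbound : ∀ θ : ℝ, 0 ≤ θ → ∀ᵐ u ∂ρ, ‖(α - θ*u)⁻¹‖ ≤ α⁻¹ := by
    intro θ hθ
    filter_upwards [hneg] with u hu
    have h1 : α ≤ α - θ*u := by nlinarith
    have h2 : (0:ℝ) < α - θ*u := lt_of_lt_of_le hα0 h1
    rw [Real.norm_eq_abs, abs_of_pos (inv_pos.mpr h2)]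
    exact inv_anti₀ hα0 h1
  have hint : ∀ θ : ℝ, 0 ≤ θ → Integrable (fun u : ℝ => (α - θ*u)⁻¹) ρ := by
    intro θ hθ
    exact Integrable.mono' (integrable_const _) (hmeas θ) (hbound θ hθ)
  have hItend : Tendsto I atTop (𝓝 0) := by
    have := MeasureTheory.tendsto_integral_filter_of_dominated_convergence
      (μ := ρ) (l := atTop) (F := fun θ (u : ℝ) => (α - θ*u)⁻¹) (f := fun _ => (0:ℝ))
      (fun _ => α⁻¹)
      (Eventually.of_forall hmeas)
      (by filter_upwards [eventually_ge_atTop (0:ℝ)] with θ hθ using hbound θ hθ)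
      (integrable_const _)
      (by
        filter_upwards [hneg] with u hu
        have h1 : Tendsto (fun θ : ℝ => θ * (-u)) atTop atTop :=
          tendsto_id.atTop_mul_const (neg_pos.mpr hu)
        have h2 : Tendsto (fun θ : ℝ => α + θ * (-u)) atTop atTop :=
          tendsto_atTop_add_const_left _ α h1
        have h3 : Tendsto (fun θ : ℝ => (α + θ * (-u))⁻¹) atTop (𝓝 0) :=
          h2.inv_tendsto_atTop
        simpa [mul_neg, ← sub_eq_add_neg] using h3)
    simpa using this
  have key : ∀ θ : ℝ, 0 < θ → H θ - (1-α)/θ = α^2/θ * I θ := by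
    intro θ hθ
    have heq : ∫ u, α * u / (α - θ*u) ∂ρ
        = ∫ u, (-(α/θ) + (α^2/θ) * (α - θ*u)⁻¹) ∂ρ := by
      apply integral_congr_ae
      filter_upwards [hneg] with u hu
      have h2 : (0:ℝ) < α - θ*u := by nlinarith
      have h2' := h2.ne'
      have hθ' := hθ.ne'
      linear_combination (-(α/θ)) * mul_inv_cancel₀ h2' + (-(α*u*(α-θ*u)⁻¹)) * mul_inv_cancel₀ hθ'
    rw [hH]
    simp only []
    rw [heq, integral_add (integrable_const _) ((hint θ hθ.le).const_mul _),
      integral_const, integral_const_mul]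
    simp only [measure_univ, probReal_univ, ENNReal.toReal_one, one_smul, hIdef]
    have hθ' := hθ.ne'
    field_simp
    ring
  have hlo : (fun θ => H θ - (1-α)/θ) =o[atTop] (fun θ => 1/θ) := by
    rw [isLittleO_iff_tendsto' (by
      filter_upwards [eventually_gt_atTop (0:ℝ)] with θ hθ h
      exact absurd h (by positivity))]
    have h1 : Tendsto (fun θ => α^2 * I θ) atTop (𝓝 0) := by
      simpa using hItend.const_mul (α^2)
    apply h1.congr'
    filter_upwards [eventually_gt_atTop (0:ℝ)] with θ hθ
    rw [key θ hθ]
    field_simp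
  refine ⟨hlo, ?_⟩
  have hb := hlo.bound (show (0:ℝ) < (α-1)/2 by linarith)
  filter_upwards [hb, eventually_gt_atTop (0:ℝ)] with θ h1 h2
  rw [Real.norm_eq_abs, Real.norm_eq_abs,
    abs_of_pos (by positivity : (0:ℝ) < 1/θ)] at h1
  have h3 : H θ - (1-α)/θ ≤ (α-1)/2 * (1/θ) := (abs_le.mp h1).2
  have h4 : (1-α)/θ + (α-1)/2 * (1/θ) = (1-α)/(2*θ) := by
    field_simp
    ring
  have h5 : (1-α)/(2*θ) < 0 := div_neg_of_neg_of_pos (by linarith) (by linarith)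
  linarith
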